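/- The number of elements of G₀ = G ∩ K{X} equals L − rank(M_{L−1}), where M_{L−1} is the principal matrix of P(X,U). -/

import Mathlib

open MvPolynomial

namespace DPPE

/-- Differential variables: `(Sum.inl i, k)` is the `k`-th derivative of `xᵢ`;
`(Sum.inr j, k)` is the `k`-th derivative of `uⱼ`. -/
abbrev Vr (n : ℕ) := (Fin n ⊕ Fin (n - 1)) × ℕ

/-- The differential polynomial ring `K{X ∪ U}`. -/
abbrev R (K : Type) [Field K] (n : ℕ) := MvPolynomial (Vr n) K

variable {K : Type} [Field K] {n : ℕ}

/-- The order of `f` in the differential indeterminate `v` (equal to `-1` if absent). -/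
noncomputable def ordIn {A : Type} [CommSemiring A] (f : MvPolynomial (Vr n) A)
    (v : Fin n ⊕ Fin (n - 1)) : ℤ :=
  WithBot.unbotD (-1) ((f.vars.filter (fun w => w.1 = v)).image (fun w => (w.2 : ℤ))).max

/-- The (total) order of the differential polynomial `f`. -/
noncomputable def ordTot {A : Type} [CommSemiring A] (f : MvPolynomial (Vr n) A) : ℕ :=
  WithBot.unbotD 0 (f.vars.image Prod.snd).max

/-- `f` belongs to `K{X}`. -/
def xOnly {A : Type} [CommSemiring A] (f : MvPolynomial (Vr n) A) : Prop :=
  ∀ w ∈ f.vars, (w.1).isLeft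

/-- `f` belongs to `K{U}`. -/
def uOnly {A : Type} [CommSemiring A] (f : MvPolynomial (Vr n) A) : Prop :=
  ∀ w ∈ f.vars, (w.1).isRight

/-- `f` is a linear (degree at most 1) differential polynomial. -/
def IsLinearPoly {A : Type} [CommSemiring A] (f : MvPolynomial (Vr n) A) : Prop :=
  f.totalDegree ≤ 1

/-- The coefficient of the `k`-th derivative of the indeterminate `v` in `f`. -/
noncomputable def cf {A : Type} [CommSemiring A] (f : MvPolynomial (Vr n) A)
    (v : Fin n ⊕ Fin (n - 1)) (k : ℕ) : A :=
  MvPolynomial.coeff (Finsupp.single (v, k) 1) f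

/-- An order embedding realizing the ranking `R*` on `X ∪ U` that eliminates `U` with
respect to `X`, orderly on each block, with `x_n < ⋯ < x_1` and `u_1 < ⋯ < u_{n-1}`. -/
def rkk (w : Vr n) : Lex (Bool × Lex (ℕ × ℕ)) :=
  toLex (Sum.elim (fun i => (false, toLex (w.2, (i.rev : ℕ))))
    (fun j => (true, toLex (w.2, (j : ℕ)))) w.1)

/-- `v` is the lead (highest ranked derivative w.r.t. `R*`) of `g`. -/
def IsLead {A : Type} [CommSemiring A] (g : MvPolynomial (Vr n) A) (v : Vr n) : Prop :=
  v ∈ g.vars ∧ ∀ w ∈ g.vars, rkk w ≤ rkk v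

/-- A system `𝒫(X,U)` of `n` linear differential polynomial parametric equations
`xᵢ = Pᵢ(U) = aᵢ - Hᵢ(U)` in `n-1` differential parameters, over an ordinary
differential field `(K, der)`;  `D` is the induced derivation on `K{X ∪ U}`.
`Fᵢ = xᵢ - aᵢ + Hᵢ(U)`. -/
structure Sys (K : Type) [Field K] (n : ℕ) where
  hn : 2 ≤ n
  der : Derivation ℤ K K
  D : Derivation ℤ (R K n) (R K n)
  hD_C : ∀ c : K, D (C c) = C (der c)
  hD_X : ∀ (v : Fin n ⊕ Fin (n - 1)) (k : ℕ), D (X (v, k)) = X (v, k + 1)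
  a : Fin n → K
  H : Fin n → R K n
  H_hom : ∀ i, (H i).IsHomogeneous 1
  H_u : ∀ i, uOnly (H i)
  H_ne : ∃ i, H i ≠ 0
  param : ∀ j : Fin (n - 1), ∃ i, 0 ≤ ordIn (H i) (Sum.inr j)

namespace Sys

/-- `Fᵢ = xᵢ - aᵢ + Hᵢ(U)`. -/
noncomputable def F (S : Sys K n) (i : Fin n) : R K n :=
  X (Sum.inl i, 0) - C (S.a i) + S.H i

/-- `oᵢ = ord(Fᵢ)`. -/
noncomputable def o (S : Sys K n) (i : Fin n) : ℕ := ordTot (S.F i)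

/-- `γⱼ = min_i (oᵢ - ord(Fᵢ, uⱼ))`. -/
noncomputable def gamZ (S : Sys K n) (j : Fin (n - 1)) : ℤ :=
  (Finset.univ : Finset (Fin n)).inf' ⟨⟨0, by have h := S.hn; omega⟩, Finset.mem_univ _⟩
    fun i => (S.o i : ℤ) - ordIn (S.F i) (Sum.inr j)

noncomputable def gam (S : Sys K n) (j : Fin (n - 1)) : ℕ := (S.gamZ j).toNat

/-- `N = ∑ oᵢ`. -/
noncomputable def Nn (S : Sys K n) : ℕ := ∑ i, S.o i

/-- The completeness index `γ = ∑ γⱼ`. -/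
noncomputable def gamT (S : Sys K n) : ℕ := ∑ j, S.gam j

/-- `L = ∑ (N - oᵢ - γ + 1)`. -/
noncomputable def L (S : Sys K n) : ℕ := ∑ i, (S.Nn - S.o i - S.gamT + 1)

/-- `Lʰ = ∑ (N - oᵢ - γ)`. -/
noncomputable def Lh (S : Sys K n) : ℕ := ∑ i, (S.Nn - S.o i - S.gamT)

/-- The set `PS = {∂^k Fᵢ ∣ 0 ≤ k ≤ N - oᵢ - γ}`. -/
def PSset (S : Sys K n) : Set (R K n) :=
  {g | ∃ i k, k ≤ S.Nn - S.o i - S.gamT ∧ g = (⇑S.D)^[k] (S.F i)}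

/-- `f` belongs to the polynomial subring `K[𝒳][𝒱]`. -/
def inXV (S : Sys K n) {A : Type} [CommSemiring A] (f : MvPolynomial (Vr n) A) : Prop :=
  ∀ w ∈ f.vars,
    Sum.elim (fun i => w.2 ≤ S.Nn - S.o i - S.gamT)
      (fun j => w.2 ≤ S.Nn - S.gam j - S.gamT) w.1

/-- Membership in the ideal `(PS)` generated by `PS` in `K[𝒳][𝒱]`. -/
def PSIdealMem (S : Sys K n) (f : R K n) : Prop :=
  f ∈ Ideal.span S.PSset ∧ S.inXV f

/-- Substitution `x_{ik} ↦ ∂^k(Pᵢ(U))` defining the implicit ideal. -/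
noncomputable def subst (S : Sys K n) : R K n →ₐ[K] R K n :=
  aeval fun w =>
    Sum.elim (fun i => (⇑S.D)^[w.2] (C (S.a i) - S.H i)) (fun j => X (Sum.inr j, w.2)) w.1

/-- Membership in the implicit ideal `ID = {f ∈ K{X} ∣ f(P₁(U),…,Pₙ(U)) = 0}`. -/
def memID (S : Sys K n) (f : R K n) : Prop := xOnly f ∧ S.subst f = 0

/-- Membership in the differential ideal `[A]` of `K{X}` generated by `A ∈ K{X}`. -/
def memDiffSpanX (S : Sys K n) (A f : R K n) : Prop :=
  xOnly f ∧ f ∈ Ideal.span {g | ∃ k, g = (⇑S.D)^[k] A}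

/-- `dim ID = n - 1`: the implicit ideal has a characteristic set `{A}` with `A`
a nonzero linear differential polynomial, i.e. `ID = [A]`. -/
def DimFull (S : Sys K n) : Prop :=
  ∃ A : R K n, A ≠ 0 ∧ IsLinearPoly A ∧ xOnly A ∧ ∀ f, (S.memID f ↔ S.memDiffSpanX A f)

/-- The action of a linear differential operator `Lop = ∑ cₖ ∂^k ∈ K[∂]` on `f`. -/
noncomputable def applyOp (S : Sys K n) (Lop : Polynomial K) (f : R K n) : R K n :=
  ∑ k ∈ Lop.support, C (Lop.coeff k) * (⇑S.D)^[k] f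

/-- `Lop` is a left divisor of `Fop` in `K[∂]`. -/
def leftDvd (S : Sys K n) (Lop Fop : Polynomial K) : Prop :=
  ∃ Mop : Polynomial K, ∀ f : R K n, S.applyOp Fop f = S.applyOp Lop (S.applyOp Mop f)

/-- For `B ∈ ID` linear, written `B = ∑ 𝓕ᵢ(xᵢ - aᵢ)`: the operator `𝓕ᵢ ∈ K[∂]`. -/
noncomputable def opOf (S : Sys K n) (B : R K n) (i : Fin n) : Polynomial K :=
  ∑ k ∈ Finset.range (ordTot B + 1), Polynomial.monomial k (cf B (Sum.inl i) k)

/-- `B` is `ID`-primitive: the greatest common left divisor of `𝓕₁,…,𝓕ₙ` lies in `K`. -/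
def IDPrimitive (S : Sys K n) (B : R K n) : Prop :=
  ∀ Lop : Polynomial K, (∀ i, S.leftDvd Lop (S.opOf B i)) → Lop.natDegree = 0

/-- `B'` is an `ID`-primitive part of `B`:  `𝓕ᵢ = IDcont(B)·𝓛ᵢ` with `𝓛₁,…,𝓛ₙ`
coprime and `B' = ∑ 𝓛ᵢ(xᵢ - aᵢ)`. -/
def IsIDPrimPart (S : Sys K n) (B B' : R K n) : Prop :=
  ∃ (Lop : Polynomial K) (Lfam : Fin n → Polynomial K),
    (∀ i f, S.applyOp (S.opOf B i) f = S.applyOp Lop (S.applyOp (Lfam i) f)) ∧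
    (∀ Q : Polynomial K, (∀ i, S.leftDvd Q (Lfam i)) → Q.natDegree = 0) ∧
    B' = ∑ i, S.applyOp (Lfam i) (X (Sum.inl i, 0) - C (S.a i))

/-- The co-order of `B` in `(PS)`: the greatest `c` with `∂^c B ∈ (PS)`. -/
noncomputable def coOrd (S : Sys K n) (B : R K n) : ℕ :=
  sSup {c : ℕ | S.PSIdealMem ((⇑S.D)^[c] B)}

/-- The leading coefficients vector `l(B) = (α₁,…,αₙ)`, `αᵢ` the coefficient of
`∂^{N - oᵢ - γ - c(B)}` in `𝓕ᵢ`. -/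
noncomputable def lvec (S : Sys K n) (B : R K n) : Fin n → K :=
  fun i => cf B (Sum.inl i) (S.Nn - S.o i - S.gamT - S.coOrd B)

/-- The leading matrix `S` of the system: entry `(i,j)` is the coefficient of
`u_{n-j, oᵢ - γ_{n-j}}` in `Fᵢ`. -/
noncomputable def Smat (S : Sys K n) : Matrix (Fin n) (Fin (n - 1)) K :=
  Matrix.of fun i j =>
    if S.gam j.rev ≤ S.o i then cf (S.F i) (Sum.inr j.rev) (S.o i - S.gam j.rev) else 0

/-- Row indices of the complete differential resultant matrix `M(L)`. -/
abbrev RI (S : Sys K n) := (i : Fin n) × Fin (S.Nn - S.o i - S.gamT + 1)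

/-- Column indices corresponding to the variables `𝒱`. -/
abbrev CI (S : Sys K n) := (j : Fin (n - 1)) × Fin (S.Nn - S.gam j - S.gamT + 1)

/-- The principal matrix `M_{L-1}` of the system. -/
noncomputable def Mprin (S : Sys K n) : Matrix S.RI S.CI K :=
  Matrix.of fun ik jm => cf ((⇑S.D)^[(ik.2 : ℕ)] (S.F ik.1)) (Sum.inr jm.1) (jm.2 : ℕ)

/-- The complete differential resultant matrix `M(L)` (last column holds the parts
`x_{ik} - ∂^k aᵢ`). -/
noncomputable def Mfull (S : Sys K n) : Matrix S.RI (S.CI ⊕ Unit) (R K n) :=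
  Matrix.of fun ik c =>
    Sum.elim
      (fun jm => (C (cf ((⇑S.D)^[(ik.2 : ℕ)] (S.F ik.1)) (Sum.inr jm.1) (jm.2 : ℕ)) : R K n))
      (fun _ => X (Sum.inl ik.1, (ik.2 : ℕ)) - C ((⇑S.der)^[(ik.2 : ℕ)] (S.a ik.1))) c

/-- The linear complete differential resultant `∂CRes(F₁,…,Fₙ) = det M(L)`. -/
noncomputable def dCRes (S : Sys K n) : R K n :=
  if h : Fintype.card (S.CI ⊕ Unit) = Fintype.card S.RI then
    (S.Mfull.submatrix (Fintype.equivOfCardEq h) id).det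
  else 0

/-- `G` is the (reduced) Groebner basis associated to the system `𝒫(X,U)`,
w.r.t. the lex monomial order induced by the ranking `R*`. -/
def IsAssocGB (S : Sys K n) (G : Finset (R K n)) : Prop :=
  (∀ g ∈ G, g ≠ 0 ∧ IsLinearPoly g ∧ S.inXV g ∧ g ∈ Ideal.span S.PSset) ∧
  Ideal.span (G : Set (R K n)) = Ideal.span S.PSset ∧
  (∀ g ∈ G, ∃ v : Vr n, IsLead g v ∧ cf g v.1 v.2 = 1 ∧ ∀ g' ∈ G, g' ≠ g → v ∉ g'.vars) ∧
  (∀ f : R K n, f ∈ Ideal.span S.PSset → S.inXV f → IsLinearPoly f → f ≠ 0 →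
    ∃ g ∈ G, ∃ v : Vr n, IsLead g v ∧ IsLead f v)

end Sys

/-- `G₀ = G ∩ K{X}`. -/
noncomputable def G0 (G : Finset (R K n)) : Finset (R K n) :=
  @Finset.filter _ (fun g => xOnly g) (Classical.decPred _) G

section Aux

variable {K : Type} [Field K] {n : ℕ}

lemma mon_eq_single {m : Vr n →₀ ℕ} (hm : (m.sum fun _ e => e) ≤ 1) {w : Vr n}
    (hw : w ∈ m.support) : m = Finsupp.single w 1 := by
  have h1 : 1 ≤ m w := Nat.one_le_iff_ne_zero.2 (Finsupp.mem_support_iff.1 hw)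
  have hsum : m w + ∑ x ∈ m.support.erase w, m x ≤ 1 := by
    rw [Finset.add_sum_erase _ _ hw]; exact hm
  have hmw : m w = 1 := by omega
  have hrest : ∑ x ∈ m.support.erase w, m x = 0 := by omega
  ext x
  by_cases hx : x = w
  · subst hx; simp [hmw]
  · rw [Finsupp.single_eq_of_ne' (Ne.symm hx)]
    by_cases hxs : x ∈ m.support
    · exact Finset.sum_eq_zero_iff.1 hrest x (Finset.mem_erase.2 ⟨hx, hxs⟩)
    · exact Finsupp.notMem_support_iff.1 hxs

lemma cf_eq (f : R K n) (w : Vr n) : cf f w.1 w.2 = coeff (Finsupp.single w 1) f := rfl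

lemma coeff_single_ne_zero_mem_vars {f : R K n} {w : Vr n}
    (h : coeff (Finsupp.single w 1) f ≠ 0) : w ∈ f.vars :=
  (mem_vars w).2 ⟨_, mem_support_iff.2 h, by simp⟩

lemma mem_vars_support {f : R K n} (hf : f.totalDegree ≤ 1) {w : Vr n} (hw : w ∈ f.vars) :
    Finsupp.single w 1 ∈ f.support := by
  obtain ⟨m, hm, hwm⟩ := (mem_vars w).1 hw
  have := mon_eq_single (le_trans (le_totalDegree hm) hf) hwm
  rwa [← this]

lemma mem_vars_coeff {f : R K n} (hf : f.totalDegree ≤ 1) {w : Vr n} (hw : w ∈ f.vars) :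
    coeff (Finsupp.single w 1) f ≠ 0 :=
  mem_support_iff.1 (mem_vars_support hf hw)

lemma linear_rep {f : R K n} (hf : f.totalDegree ≤ 1) :
    f = C (coeff 0 f) + ∑ w ∈ f.vars, C (coeff (Finsupp.single w 1) f) * X w := by
  apply MvPolynomial.ext; intro m
  rw [coeff_add, coeff_sum]
  simp only [coeff_C_mul, coeff_X', coeff_C]
  by_cases h0 : m = 0
  · subst h0
    rw [if_pos rfl]
    have hz : ∀ w ∈ f.vars,
        coeff (Finsupp.single w 1) f * (if Finsupp.single w 1 = (0 : Vr n →₀ ℕ) then (1:K) else 0)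
          = 0 := by
      intro w _; rw [if_neg (by simp), mul_zero]
    rw [Finset.sum_congr rfl hz, Finset.sum_const_zero, add_zero]
  · rw [if_neg fun h => h0 h.symm, zero_add]
    by_cases hs : ∃ w : Vr n, m = Finsupp.single w 1
    · obtain ⟨w, rfl⟩ := hs
      have hz : ∀ w' ∈ f.vars,
          coeff (Finsupp.single w' 1) f *
              (if Finsupp.single w' 1 = Finsupp.single w 1 then (1:K) else 0)
            = if w' = w then coeff (Finsupp.single w' 1) f else 0 := by
        intro w' _
        by_cases hww : w' = w
        · subst hww; simp
        · rw [if_neg fun hh => hww ((Finsupp.single_left_inj one_ne_zero).1 hh), if_neg hww,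
            mul_zero]
      rw [Finset.sum_congr rfl hz, Finset.sum_ite_eq' f.vars w]
      split
      · rfl
      · next h =>
          by_contra hc
          exact h (coeff_single_ne_zero_mem_vars hc)
    · push_neg at hs
      have hm0 : coeff m f = 0 := by
        by_contra hc
        obtain ⟨w, hwm⟩ : ∃ w, w ∈ m.support := by
          rcases Finset.eq_empty_or_nonempty m.support with he | hne
          · exact absurd (Finsupp.support_eq_empty.1 he) h0
          · exact hne
        exact hs w (mon_eq_single (le_trans (le_totalDegree (mem_support_iff.2 hc)) hf) hwm)
      rw [hm0]
      symm; apply Finset.sum_eq_zero; intro w _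
      rw [if_neg fun h => hs w h.symm, mul_zero]

lemma td_CmulX (a : K) (w : Vr n) : (C a * X w : R K n).totalDegree ≤ 1 := by
  rw [C_mul_X_eq_monomial]
  exact (totalDegree_monomial_le _ _).trans (by simp)

lemma vars_CmulX (a : K) (w : Vr n) : (C a * X w : R K n).vars ⊆ {w} := by
  rw [C_mul_X_eq_monomial]
  by_cases h : a = 0
  · simp [h]
  · rw [vars_monomial h, Finsupp.support_single_ne_zero _ one_ne_zero]

lemma aeval_fix (b : Vr n → R K n) {f : R K n} (h : ∀ w ∈ f.vars, b w = X w) :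
    aeval b f = f := by
  conv_lhs => rw [f.as_sum]
  rw [map_sum]
  conv_rhs => rw [f.as_sum]
  refine Finset.sum_congr rfl fun m hm => ?_
  rw [aeval_monomial, monomial_eq, MvPolynomial.algebraMap_eq]
  congr 1
  apply Finsupp.prod_congr
  intro w hw
  rw [h w ((mem_vars w).2 ⟨m, hm, hw⟩)]

lemma rkk_inl (i : Fin n) (k : ℕ) :
    rkk (n := n) (Sum.inl i, k) = toLex (false, toLex (k, (i.rev : ℕ))) := rfl

lemma rkk_inr (j : Fin (n-1)) (k : ℕ) :
    rkk (n := n) (Sum.inr j, k) = toLex (true, toLex (k, (j : ℕ))) := rfl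

lemma rkk_inj : Function.Injective (rkk (n := n)) := by
  rintro ⟨i | j, k⟩ ⟨i' | j', k'⟩ h <;>
    simp only [rkk_inl, rkk_inr, toLex_inj, Prod.mk.injEq] at h
  · obtain ⟨-, rfl, h3⟩ := h
    rw [Fin.rev_injective (Fin.val_injective h3)]
  · exact absurd h.1 (by simp)
  · exact absurd h.1 (by simp)
  · obtain ⟨-, rfl, h3⟩ := h
    rw [Fin.val_injective h3]

lemma lead_unique {g : R K n} {v v' : Vr n} (h : IsLead g v) (h' : IsLead g v') : v = v' :=
  rkk_inj (le_antisymm (h'.2 _ h.1) (h.2 _ h'.1))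

lemma rkk_not_le {j : Fin (n-1)} {m : ℕ} {i : Fin n} {k : ℕ} :
    ¬ (rkk (n := n) (Sum.inr j, m) ≤ rkk (Sum.inl i, k)) := by
  rw [rkk_inl, rkk_inr]
  intro hle
  rcases (Prod.Lex.le_iff).1 hle with h1 | ⟨h1, -⟩
  · exact absurd (show (true : Bool) < false from h1) (by decide)
  · exact absurd (show (true : Bool) = false from h1) (by decide)

end Aux
section Aux2

variable {K : Type} [Field K] {n : ℕ} (S : Sys K n)

lemma D_CX (c : K) (w : Vr n) :
    S.D (C c * X w) = C (S.der c) * X w + C c * X (w.1, w.2 + 1) := by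
  have hX : S.D (X w) = X (w.1, w.2 + 1) := S.hD_X w.1 w.2
  rw [Derivation.leibniz, S.hD_C, hX, smul_eq_mul, smul_eq_mul]
  ring

lemma D_rep {f : R K n} (hf : f.totalDegree ≤ 1) :
    S.D f = C (S.der (coeff 0 f)) +
      ∑ w ∈ f.vars, (C (S.der (coeff (Finsupp.single w 1) f)) * X w
        + C (coeff (Finsupp.single w 1) f) * X (w.1, w.2 + 1)) := by
  conv_lhs => rw [linear_rep hf]
  rw [map_add, map_sum, S.hD_C]
  congr 1
  exact Finset.sum_congr rfl fun w _ => D_CX S _ w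

lemma D_td {f : R K n} (hf : f.totalDegree ≤ 1) : (S.D f).totalDegree ≤ 1 := by
  rw [D_rep S hf]
  refine le_trans (totalDegree_add _ _) (max_le (by simp [totalDegree_C]) ?_)
  refine le_trans (totalDegree_finset_sum _ _) (Finset.sup_le fun w _ => ?_)
  exact le_trans (totalDegree_add _ _) (max_le (td_CmulX _ _) (td_CmulX _ _))

lemma D_vars {f : R K n} (hf : f.totalDegree ≤ 1) :
    ∀ w' ∈ (S.D f).vars, ∃ w ∈ f.vars, w'.1 = w.1 := by
  intro w' hw'
  rw [D_rep S hf] at hw'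
  have h1 := vars_add_subset _ _ hw'
  rw [vars_C, Finset.empty_union] at h1
  have h2 := vars_sum_subset _ _ h1
  rw [Finset.mem_biUnion] at h2
  obtain ⟨w, hw, hmem⟩ := h2
  rcases Finset.mem_union.1 (vars_add_subset _ _ hmem) with h4 | h4
  · have := vars_CmulX _ _ h4
    rw [Finset.mem_singleton] at this
    exact ⟨w, hw, by rw [this]⟩
  · have := vars_CmulX _ _ h4
    rw [Finset.mem_singleton] at this
    exact ⟨w, hw, by rw [this]⟩

lemma D_uOnly {f : R K n} (hf : f.totalDegree ≤ 1) (hu : uOnly f) : uOnly (S.D f) := by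
  intro w' hw'
  obtain ⟨w, hw, he⟩ := D_vars S hf w' hw'
  rw [he]
  exact hu w hw

lemma D_iter_pres (k : ℕ) {f : R K n} (hf : f.totalDegree ≤ 1) (hu : uOnly f) :
    ((⇑S.D)^[k] f).totalDegree ≤ 1 ∧ uOnly ((⇑S.D)^[k] f) := by
  induction k with
  | zero => exact ⟨hf, hu⟩
  | succ k ih =>
      rw [Function.iterate_succ_apply']
      exact ⟨D_td S ih.1, D_uOnly S ih.1 ih.2⟩

lemma D_iter_sub (k : ℕ) (f g : R K n) :
    (⇑S.D)^[k] (f - g) = (⇑S.D)^[k] f - (⇑S.D)^[k] g := by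
  induction k with
  | zero => rfl
  | succ k ih =>
      rw [Function.iterate_succ_apply', Function.iterate_succ_apply',
        Function.iterate_succ_apply', ih, S.D.map_sub]

lemma D_iter_add (k : ℕ) (f g : R K n) :
    (⇑S.D)^[k] (f + g) = (⇑S.D)^[k] f + (⇑S.D)^[k] g := by
  induction k with
  | zero => rfl
  | succ k ih =>
      rw [Function.iterate_succ_apply', Function.iterate_succ_apply',
        Function.iterate_succ_apply', ih, map_add]

lemma D_iter_C (c : K) (k : ℕ) : (⇑S.D)^[k] (C c : R K n) = C ((⇑S.der)^[k] c) := by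
  induction k with
  | zero => rfl
  | succ k ih =>
      rw [Function.iterate_succ_apply', Function.iterate_succ_apply', ih, S.hD_C]

lemma D_iter_X (v : Fin n ⊕ Fin (n - 1)) (k0 k : ℕ) :
    (⇑S.D)^[k] (X (v, k0) : R K n) = X (v, k0 + k) := by
  induction k with
  | zero => rfl
  | succ k ih =>
      rw [Function.iterate_succ_apply', ih]
      exact S.hD_X v (k0 + k)

lemma F_struct (i : Fin n) (k : ℕ) :
    (⇑S.D)^[k] (S.F i)
      = X (Sum.inl i, k) - C ((⇑S.der)^[k] (S.a i)) + (⇑S.D)^[k] (S.H i) := by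
  have h : S.F i = (X (Sum.inl i, 0) - C (S.a i)) + S.H i := rfl
  rw [h, D_iter_add, D_iter_sub, D_iter_C, D_iter_X, Nat.zero_add]

lemma H_td (i : Fin n) : (S.H i).totalDegree ≤ 1 := (S.H_hom i).totalDegree_le

lemma H_pres (i : Fin n) (k : ℕ) :
    ((⇑S.D)^[k] (S.H i)).totalDegree ≤ 1 ∧ uOnly ((⇑S.D)^[k] (S.H i)) :=
  D_iter_pres S k (H_td S i) (S.H_u i)

lemma p_td (i : Fin n) (k : ℕ) : ((⇑S.D)^[k] (S.F i)).totalDegree ≤ 1 := by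
  rw [F_struct]
  refine le_trans (totalDegree_add _ _) (max_le (le_trans (totalDegree_sub _ _)
    (max_le ?_ ?_)) (H_pres S i k).1)
  · exact le_of_eq (totalDegree_X _)
  · simp

lemma uOnly_coeff_inl {q : R K n} (hq : uOnly q) (i : Fin n) (k : ℕ) :
    coeff (Finsupp.single ((Sum.inl i : Fin n ⊕ Fin (n - 1)), k) 1) q = 0 := by
  by_contra hc
  have := hq _ (coeff_single_ne_zero_mem_vars hc)
  simp at this

lemma p_cf (i : Fin n) (k : ℕ) (i' : Fin n) (k' : ℕ) :
    coeff (Finsupp.single ((Sum.inl i' : Fin n ⊕ Fin (n - 1)), k') 1) ((⇑S.D)^[k] (S.F i))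
      = if i' = i ∧ k' = k then 1 else 0 := by
  rw [F_struct, coeff_add, coeff_sub, uOnly_coeff_inl (H_pres S i k).2,
    coeff_C, if_neg (fun h => one_ne_zero (Finsupp.single_eq_zero.1 h.symm))]
  rw [coeff_X']
  by_cases h : i' = i ∧ k' = k
  · obtain ⟨rfl, rfl⟩ := h
    rw [if_pos rfl, if_pos ⟨rfl, rfl⟩]
    ring
  · rw [if_neg, if_neg h]
    · ring
    · intro he
      have h2 := (Finsupp.single_left_inj one_ne_zero).1 he
      obtain ⟨h3, h4⟩ := Prod.ext_iff.1 h2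
      exact h ⟨(Sum.inl_injective h3).symm, h4.symm⟩

lemma subst_C (c : K) : S.subst (C c) = C c := by
  unfold Sys.subst
  rw [aeval_C, MvPolynomial.algebraMap_eq]

lemma subst_X_inl (i : Fin n) (k : ℕ) :
    S.subst (X ((Sum.inl i : Fin n ⊕ Fin (n - 1)), k))
      = C ((⇑S.der)^[k] (S.a i)) - (⇑S.D)^[k] (S.H i) := by
  unfold Sys.subst
  rw [aeval_X]
  show (⇑S.D)^[k] (C (S.a i) - S.H i) = _
  rw [D_iter_sub, D_iter_C]

lemma subst_X_inr (j : Fin (n - 1)) (m : ℕ) :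
    S.subst (X ((Sum.inr j : Fin n ⊕ Fin (n - 1)), m))
      = X ((Sum.inr j : Fin n ⊕ Fin (n - 1)), m) := by
  unfold Sys.subst
  rw [aeval_X]
  rfl

lemma subst_uOnly {q : R K n} (hq : uOnly q) : S.subst q = q := by
  show aeval _ q = q
  apply aeval_fix
  intro w hw
  obtain ⟨j, hj⟩ := Sum.isRight_iff.1 (hq w hw)
  have hw' : w = (Sum.inr j, w.2) := Prod.ext hj rfl
  rw [hw']
  rfl

lemma subst_p (i : Fin n) (k : ℕ) : S.subst ((⇑S.D)^[k] (S.F i)) = 0 := by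
  rw [F_struct, map_add, map_sub, subst_X_inl, subst_uOnly S (H_pres S i k).2]
  have hc : S.subst (C ((⇑S.der)^[k] (S.a i))) = C ((⇑S.der)^[k] (S.a i)) := subst_C S _
  rw [hc]
  ring

lemma subst_ideal {f : R K n} (hf : f ∈ Ideal.span S.PSset) : S.subst f = 0 := by
  have h1 : S.subst f ∈ Ideal.map S.subst (Ideal.span S.PSset) :=
    Ideal.mem_map_of_mem _ hf
  rw [Ideal.map_span] at h1
  have h2 : (⇑S.subst) '' S.PSset ⊆ ((⊥ : Ideal (R K n)) : Set (R K n)) := by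
    rintro y ⟨g, ⟨i, k, hk, rfl⟩, rfl⟩
    simp [subst_p S i k]
  exact (Ideal.mem_bot).1 (Ideal.span_le.2 h2 h1)

lemma linear_decomp {f : R K n} (hf : f.totalDegree ≤ 1) (h0 : S.subst f = 0) :
    f = ∑ w ∈ f.vars, coeff (Finsupp.single w 1) f •
      (Sum.elim (fun i => (⇑S.D)^[w.2] (S.F i)) (fun _ => (0 : R K n)) w.1) := by
  have hrep := linear_rep hf
  have hsub : (0 : R K n)
      = C (coeff 0 f) + ∑ w ∈ f.vars, C (coeff (Finsupp.single w 1) f) * S.subst (X w) := by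
    rw [← h0]
    conv_lhs => rw [hrep]
    rw [map_add, map_sum, subst_C]
    congr 1
    exact Finset.sum_congr rfl fun w _ => by rw [map_mul, subst_C]
  calc f = (C (coeff 0 f) + ∑ w ∈ f.vars, C (coeff (Finsupp.single w 1) f) * X w) - 0 := by
        rw [← hrep, sub_zero]
    _ = ∑ w ∈ f.vars, C (coeff (Finsupp.single w 1) f) * (X w - S.subst (X w)) := by
        conv_lhs => rw [hsub]
        rw [show ∀ a b c d : R K n, a + b - (c + d) = (a - c) + (b - d) from by intros; ring,
          sub_self, zero_add, ← Finset.sum_sub_distrib]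
        exact Finset.sum_congr rfl fun w _ => by ring
    _ = _ := by
        refine Finset.sum_congr rfl fun w hw => ?_
        obtain ⟨v, k2⟩ := w
        rcases v with i | j
        · rw [subst_X_inl]
          rw [smul_eq_C_mul]
          show _ = C _ * (⇑S.D)^[k2] (S.F i)
          rw [F_struct]
          ring
        · rw [subst_X_inr]
          simp

lemma mem_span_pfam {f : R K n} (hf : f.totalDegree ≤ 1) (hX : S.inXV f)
    (hI : f ∈ Ideal.span S.PSset) :
    f ∈ Submodule.span K (Set.range (fun ik : S.RI => (⇑S.D)^[(ik.2 : ℕ)] (S.F ik.1))) := by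
  rw [linear_decomp S hf (subst_ideal S hI)]
  refine Submodule.sum_mem _ fun w hw => ?_
  obtain ⟨v, k2⟩ := w
  rcases v with i | j
  · refine Submodule.smul_mem _ _ (Submodule.subset_span ?_)
    have hb : k2 ≤ S.Nn - S.o i - S.gamT := hX _ hw
    exact ⟨⟨i, ⟨k2, by omega⟩⟩, rfl⟩
  · simp

lemma pfam_indep :
    LinearIndependent K (fun ik : S.RI => (⇑S.D)^[(ik.2 : ℕ)] (S.F ik.1)) := by
  rw [Fintype.linearIndependent_iff]
  intro c hc ik
  have hco := congrArg
    (coeff (Finsupp.single ((Sum.inl ik.1 : Fin n ⊕ Fin (n - 1)), (ik.2 : ℕ)) 1)) hc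
  rw [coeff_sum] at hco
  simp only [coeff_smul, smul_eq_mul, coeff_zero] at hco
  rw [Finset.sum_eq_single ik] at hco
  · rw [p_cf, if_pos ⟨rfl, rfl⟩, mul_one] at hco
    exact hco
  · intro b _ hb
    rw [p_cf, if_neg, mul_zero]
    rintro ⟨h1, h2⟩
    apply hb
    rcases b with ⟨b1, b2⟩
    rcases ik with ⟨i1, i2⟩
    cases h1
    have h2' : (i2 : ℕ) = (b2 : ℕ) := h2
    rw [Fin.val_injective h2']
  · intro h
    exact absurd (Finset.mem_univ ik) h

lemma card_RI : Fintype.card S.RI = S.L := by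
  rw [Fintype.card_sigma]
  unfold Sys.L
  simp

end Aux2
/-- The number of elements of `G₀ = G ∩ K{X}` equals
`L - rank(M_{L-1})`, where `M_{L-1}` is the principal matrix of `𝒫(X,U)`. -/
theorem statement_3 {K : Type} [Field K] {n : ℕ} (S : Sys K n) (G : Finset (R K n))
    (hG : S.IsAssocGB G) :
    (G0 G).card = S.L - S.Mprin.rank := by
  classical
  obtain ⟨hG1, hG2, hG3, -⟩ := hG
  set W : Submodule K (R K n) := Submodule.span K
      (Set.range (fun ik : S.RI => (⇑S.D)^[(ik.2 : ℕ)] (S.F ik.1))) with hW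
  have leadspec : ∀ g ∈ G, ∀ v, IsLead g v →
      cf g v.1 v.2 = 1 ∧ ∀ g' ∈ G, g' ≠ g → v ∉ g'.vars := by
    intro g hg v hv
    obtain ⟨v', hv', hcf, hred⟩ := hG3 g hg
    obtain rfl := lead_unique hv hv'
    exact ⟨hcf, hred⟩
  set P : Vr n → Prop := fun w => ∃ g, g ∈ G ∧ IsLead g w with hPdef
  have guniq : ∀ w g g', g ∈ G → g' ∈ G → IsLead g w → IsLead g' w → g = g' := by
    intro w g g' hg hg' h h'
    by_contra hne
    exact ((leadspec g hg w h).2 g' hg' (fun e => hne e.symm)) h'.1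
  have hch : ∀ w (h : P w), h.choose ∈ G ∧ IsLead h.choose w := fun w h => h.choose_spec
  set b1 : Vr n → R K n := fun w => if h : P w then X w - (h.choose - X w) else X w with hb1
  set b2 : Vr n → R K n := fun w => if h : P w then h.choose else X w with hb2
  have hrP : ∀ w (h : P w), ∀ w' ∈ (h.choose - X w).vars, ¬ P w' := by
    intro w h w' hw' hPw'
    obtain ⟨g2, hg2, hl2⟩ := hPw'
    obtain ⟨hgG, hlead⟩ := hch w h
    have hww' : w' = w := by
      rcases Finset.mem_union.1 ((vars_sub_subset (p := Exists.choose h) (q := X w)) hw') with hcase | hcase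
      · by_cases he : h.choose = g2
        · exact lead_unique (he ▸ hl2 : IsLead h.choose w') hlead
        · exact absurd hcase ((leadspec g2 hg2 w' hl2).2 h.choose hgG he)
      · rwa [vars_X, Finset.mem_singleton] at hcase
    subst hww'
    have hcf0 : coeff (Finsupp.single w' 1) (h.choose - X w') = 0 := by
      rw [coeff_sub, coeff_X', if_pos rfl]
      have h1 : cf h.choose w'.1 w'.2 = 1 := (leadspec _ hgG _ hlead).1
      rw [cf_eq] at h1
      rw [h1, sub_self]
    have htd : (h.choose - X w').totalDegree ≤ 1 :=
      le_trans (totalDegree_sub _ _)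
        (max_le (hG1 _ hgG).2.1 (le_of_eq (totalDegree_X _)))
    exact (mem_vars_coeff htd hw') hcf0
  have hb1P : ∀ w (h : P w), b1 w = X w - (h.choose - X w) := fun w h => dif_pos h
  have hb1N : ∀ w, ¬ P w → b1 w = X w := fun w h => dif_neg h
  have hb2P : ∀ w (h : P w), b2 w = h.choose := fun w h => dif_pos h
  have hb2N : ∀ w, ¬ P w → b2 w = X w := fun w h => dif_neg h
  have hfix1 : ∀ w (h : P w), aeval b1 (h.choose - X w) = h.choose - X w := by
    intro w h
    exact aeval_fix _ fun w' hw' => hb1N w' (hrP w h w' hw')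
  have hfix2 : ∀ w (h : P w), aeval b2 (h.choose - X w) = h.choose - X w := by
    intro w h
    exact aeval_fix _ fun w' hw' => hb2N w' (hrP w h w' hw')
  have hcomp : ∀ f : R K n, aeval b2 (aeval b1 f) = f := by
    have hhom : ((aeval b2 : R K n →ₐ[K] R K n).comp (aeval b1 : R K n →ₐ[K] R K n))
        = AlgHom.id K (R K n) := by
      apply MvPolynomial.algHom_ext
      intro w
      rw [AlgHom.comp_apply, aeval_X, AlgHom.id_apply]
      by_cases h : P w
      · rw [hb1P w h, map_sub, aeval_X, hb2P w h, hfix2 w h]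
        ring
      · rw [hb1N w h, aeval_X, hb2N w h]
    intro f
    exact AlgHom.congr_fun hhom f
  have himg : ∀ g ∈ G, ∃ w, P w ∧ aeval b1 g = X w := by
    intro g hg
    obtain ⟨v, hv, -, -⟩ := hG3 g hg
    have hPv : P v := ⟨g, hg, hv⟩
    have hgch : hPv.choose = g := guniq v _ _ (hch v hPv).1 hg (hch v hPv).2 hv
    refine ⟨v, hPv, ?_⟩
    have hge : g = X v + (hPv.choose - X v) := by rw [hgch]; ring
    conv_lhs => rw [hge]
    rw [map_add, aeval_X, hfix1 v hPv, hb1P v hPv, hgch]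
    ring
  have keyspan : ∀ f : R K n, f.totalDegree ≤ 1 → f ∈ Ideal.span S.PSset →
      f ∈ Submodule.span K (G : Set (R K n)) := by
    intro f hftd hfI
    have hfG : f ∈ Ideal.span (G : Set (R K n)) := by rw [hG2]; exact hfI
    have hmem : aeval b1 f ∈ Ideal.span (X '' {w | P w} : Set (R K n)) := by
      have h1 : aeval b1 f ∈ Ideal.map (aeval b1 : R K n →ₐ[K] R K n)
          (Ideal.span (G : Set (R K n))) := Ideal.mem_map_of_mem _ hfG
      rw [Ideal.map_span] at h1
      refine Ideal.span_mono ?_ h1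
      rintro y ⟨g, hg, rfl⟩
      obtain ⟨w, hPw, he⟩ := himg g (Finset.mem_coe.1 hg)
      exact ⟨w, hPw, he.symm⟩
    have hrw : aeval b1 f
        = C (coeff 0 f) + ∑ w ∈ f.vars, C (coeff (Finsupp.single w 1) f) * b1 w := by
      conv_lhs => rw [linear_rep hftd]
      rw [map_add, map_sum]
      congr 1
      · rw [aeval_C, MvPolynomial.algebraMap_eq]
      · exact Finset.sum_congr rfl fun w _ => by
          rw [map_mul, aeval_C, MvPolynomial.algebraMap_eq, aeval_X]
    have hhtd : (aeval b1 f).totalDegree ≤ 1 := by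
      rw [hrw]
      refine le_trans (totalDegree_add _ _) (max_le (by simp) ?_)
      refine le_trans (totalDegree_finset_sum _ _) (Finset.sup_le fun w _ => ?_)
      have hb1td : (b1 w).totalDegree ≤ 1 := by
        by_cases h : P w
        · rw [hb1P w h]
          refine le_trans (totalDegree_sub _ _) (max_le (le_of_eq (totalDegree_X _)) ?_)
          exact le_trans (totalDegree_sub _ _)
            (max_le (hG1 _ (hch w h).1).2.1 (le_of_eq (totalDegree_X _)))
        · rw [hb1N w h]
          exact le_of_eq (totalDegree_X _)
      exact le_trans (totalDegree_mul _ _) (by rw [totalDegree_C, zero_add]; exact hb1td)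
    have hsupp := MvPolynomial.mem_ideal_span_X_image.1 hmem
    have h0 : coeff 0 (aeval b1 f) = 0 := by
      by_contra hc
      obtain ⟨w, hwP, hne⟩ := hsupp 0 (mem_support_iff.2 hc)
      simp at hne
    have hPvars : ∀ w ∈ (aeval b1 f).vars, P w := by
      intro w hw
      obtain ⟨w', hw'P, hne⟩ := hsupp _ (mem_vars_support hhtd hw)
      have hww : w' = w := by
        by_contra hne2
        exact hne (Finsupp.single_eq_of_ne' (fun e => hne2 e.symm))
      rwa [← hww]
    have hf2 : f = aeval b2 (aeval b1 f) := (hcomp f).symm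
    have hrw2 : aeval b2 (aeval b1 f)
        = ∑ w ∈ (aeval b1 f).vars, coeff (Finsupp.single w 1) (aeval b1 f) • b2 w := by
      conv_lhs => rw [linear_rep hhtd]
      rw [h0, C_0, zero_add, map_sum]
      exact Finset.sum_congr rfl fun w _ => by
        rw [map_mul, aeval_C, MvPolynomial.algebraMap_eq, aeval_X, smul_eq_C_mul]
    rw [hf2, hrw2]
    refine Submodule.sum_mem _ fun w hw => ?_
    refine Submodule.smul_mem _ _ (Submodule.subset_span ?_)
    have hPw := hPvars w hw
    rw [hb2P w hPw]
    exact Finset.mem_coe.2 (hch w hPw).1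
  have hGW : ∀ g ∈ G, g ∈ W := fun g hg =>
    mem_span_pfam S (hG1 g hg).2.1 (hG1 g hg).2.2.1 (hG1 g hg).2.2.2
  have hWG : Submodule.span K (G : Set (R K n)) = W := by
    apply le_antisymm
    · rw [Submodule.span_le]
      intro g hg
      exact hGW g (Finset.mem_coe.1 hg)
    · rw [hW, Submodule.span_le]
      rintro y ⟨ik, rfl⟩
      exact keyspan _ (p_td S ik.1 ik.2)
        (Ideal.subset_span ⟨ik.1, (ik.2 : ℕ), Nat.lt_succ_iff.1 ik.2.isLt, rfl⟩)
  have hGind : LinearIndependent K (fun g : {x // x ∈ G} => (g : R K n)) := by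
    rw [Fintype.linearIndependent_iff]
    intro c hc g
    obtain ⟨v, hv, hcf, hred⟩ := hG3 g g.2
    have hco := congrArg (coeff (Finsupp.single v 1)) hc
    rw [coeff_sum] at hco
    simp only [coeff_smul, smul_eq_mul, coeff_zero] at hco
    rw [Finset.sum_eq_single g] at hco
    · rw [← cf_eq, hcf, mul_one] at hco
      exact hco
    · intro b _ hb
      have hz : coeff (Finsupp.single v 1) (b : R K n) = 0 := by
        by_contra hcc
        exact (hred b b.2 (fun e => hb (Subtype.ext e))) (coeff_single_ne_zero_mem_vars hcc)
      rw [hz, mul_zero]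
    · intro hg
      exact absurd (Finset.mem_univ g) hg
  have hfrW : Module.finrank K W = S.L := by
    have h2 := finrank_span_eq_card (pfam_indep S)
    rw [card_RI S] at h2
    exact h2
  have hcard : G.card = S.L := by
    have h1 := finrank_span_eq_card hGind
    rw [Subtype.range_coe_subtype] at h1
    have he : ({x | x ∈ G} : Set (R K n)) = (G : Set (R K n)) := by
      ext x; simp
    rw [he, hWG, hfrW, Fintype.card_coe] at h1
    exact h1.symm
  -- the coefficient projection onto the `𝒱`-coordinates
  set ρ : R K n →ₗ[K] (S.CI → K) := LinearMap.pi (fun jm : S.CI =>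
      MvPolynomial.lcoeff K
        (Finsupp.single ((Sum.inr jm.1 : Fin n ⊕ Fin (n - 1)), (jm.2 : ℕ)) 1)) with hρ
  have hMrow : S.Mprin = fun ik : S.RI => ρ ((⇑S.D)^[(ik.2 : ℕ)] (S.F ik.1)) := rfl
  set G1 : Finset (R K n) := G.filter (fun g => ¬ xOnly g) with hG1def
  have hρG0 : ∀ g ∈ G, xOnly g → ρ g = 0 := by
    intro g hg hx
    funext jm
    show coeff _ g = 0
    by_contra hc
    have := hx _ (coeff_single_ne_zero_mem_vars hc)
    simp at this
  have hulead : ∀ g ∈ G1, ∃ (j : Fin (n - 1)) (m : ℕ),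
      IsLead g (Sum.inr j, m) ∧ m ≤ S.Nn - S.gam j - S.gamT := by
    intro g hg
    rw [hG1def, Finset.mem_filter] at hg
    obtain ⟨hgG, hnx⟩ := hg
    obtain ⟨v, hv, -, -⟩ := hG3 g hgG
    obtain ⟨v1, vk⟩ := v
    rcases v1 with vi | vj
    · exfalso
      apply hnx
      intro w hw
      obtain ⟨w1, wk⟩ := w
      rcases hw1 : w1 with wi | wj
      · simp
      · exfalso
        subst hw1
        exact rkk_not_le (hv.2 _ hw)
    · have hb : vk ≤ S.Nn - S.gam vj - S.gamT := (hG1 g hgG).2.2.1 _ hv.1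
      exact ⟨vj, vk, hv, hb⟩
  have hind1 : LinearIndependent K (fun g : {x // x ∈ G1} => ρ (g : R K n)) := by
    rw [Fintype.linearIndependent_iff]
    intro c hc g
    obtain ⟨j, m, hlead, hmb⟩ := hulead g g.2
    have hgG : (g : R K n) ∈ G := (Finset.mem_filter.1 g.2).1
    have hco := congrFun hc (⟨j, ⟨m, by omega⟩⟩ : S.CI)
    simp only [Finset.sum_apply, Pi.smul_apply, smul_eq_mul, Pi.zero_apply] at hco
    have hρap : ∀ b : R K n,
        ρ b (⟨j, ⟨m, by omega⟩⟩ : S.CI)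
          = coeff (Finsupp.single ((Sum.inr j : Fin n ⊕ Fin (n - 1)), m) 1) b :=
      fun b => rfl
    rw [Finset.sum_eq_single g] at hco
    · rw [hρap, ← cf_eq, (leadspec _ hgG _ hlead).1, mul_one] at hco
      exact hco
    · intro b _ hb
      rw [hρap]
      have hbG : (b : R K n) ∈ G := (Finset.mem_filter.1 b.2).1
      have hz : coeff (Finsupp.single ((Sum.inr j : Fin n ⊕ Fin (n - 1)), m) 1) (b : R K n)
          = 0 := by
        by_contra hcc
        exact ((leadspec _ hgG _ hlead).2 b hbG (fun e => hb (Subtype.ext e)))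
          (coeff_single_ne_zero_mem_vars hcc)
      rw [hz, mul_zero]
    · intro hg
      exact absurd (Finset.mem_univ g) hg
  have hspan1 : Submodule.span K (ρ '' (G : Set (R K n)))
      = Submodule.span K (ρ '' (G1 : Set (R K n))) := by
    apply le_antisymm
    · rw [Submodule.span_le]
      rintro y ⟨g, hg, rfl⟩
      by_cases hx : xOnly g
      · rw [hρG0 g (Finset.mem_coe.1 hg) hx]
        exact Submodule.zero_mem _
      · exact Submodule.subset_span
          ⟨g, Finset.mem_coe.2 (by rw [hG1def]; exact Finset.mem_filter.2 ⟨Finset.mem_coe.1 hg, hx⟩), rfl⟩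
    · apply Submodule.span_mono
      apply Set.image_mono
      intro g hg
      rw [hG1def] at hg
      exact Finset.mem_coe.2 (Finset.mem_filter.1 (Finset.mem_coe.1 hg)).1
  have hMrank : S.Mprin.rank = G1.card := by
    rw [← Matrix.rank_transpose, Matrix.rank_eq_finrank_span_cols, Matrix.col_transpose]
    show Module.finrank K (Submodule.span K (Set.range S.Mprin)) = G1.card
    have e1 : Set.range S.Mprin
        = ρ '' (Set.range fun ik : S.RI => (⇑S.D)^[(ik.2 : ℕ)] (S.F ik.1)) := by
      rw [hMrow]
      have hc : (fun ik : S.RI => ρ ((⇑S.D)^[(ik.2 : ℕ)] (S.F ik.1)))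
          = ⇑ρ ∘ (fun ik : S.RI => (⇑S.D)^[(ik.2 : ℕ)] (S.F ik.1)) := rfl
      rw [hc, Set.range_comp]
    have e2 : Set.range (fun g : {x // x ∈ G1} => ρ (g : R K n))
        = ρ '' (G1 : Set (R K n)) := by
      have hc : (fun g : {x // x ∈ G1} => ρ (g : R K n))
          = ⇑ρ ∘ (fun g : {x // x ∈ G1} => (g : R K n)) := rfl
      rw [hc, Set.range_comp, Subtype.range_coe_subtype]
      rfl
    rw [e1, Submodule.span_image, ← hW, ← hWG, ← Submodule.span_image, hspan1, ← e2]
    rw [finrank_span_eq_card hind1, Fintype.card_coe]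
  have hsplit : (G0 G).card + G1.card = G.card := by
    unfold G0
    rw [hG1def]
    rw [Finset.filter_congr_decidable]
    exact Finset.card_filter_add_card_filter_not _
  rw [hMrank]
  omega

end DPPE
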